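/- Let S be an infinite set with DC_S, and suppose μ is a supercompactness measure on [S]^ω, i.e., a normal, fine ultrafilter on [S]^ω. Then μ extends the quasi-club filter: μ_S ⊆ μ. -/

import Mathlib

open Set

universe u

/-- The collection `[S]^ω` of countable subsets of `S`. -/
abbrev Cw (S : Type u) := {σ : Set S // σ.Countable}

/-- Dependent choice for the set `S`. -/
def DCax (S : Type u) : Prop :=
  ∀ R : S → S → Prop, (∀ x, ∃ y, R x y) →
    ∀ x : S, ∃ f : ℕ → S, f 0 = x ∧ ∀ n, R (f n) (f (n + 1))

/-- `F` is a filter on `[S]^ω`: contains everything, upward closed, closed under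
binary intersections. -/
def IsSetFilter (S : Type u) (F : Set (Set (Cw S))) : Prop :=
  Set.univ ∈ F ∧ (∀ A B : Set (Cw S), A ∈ F → A ⊆ B → B ∈ F) ∧
    (∀ A B : Set (Cw S), A ∈ F → B ∈ F → A ∩ B ∈ F)

/-- `F` is fine. -/
def IsFine (S : Type u) (F : Set (Set (Cw S))) : Prop :=
  ∀ τ : Cw S, {σ : Cw S | τ.1 ⊆ σ.1} ∈ F

/-- `F` has the diagonal intersection property. -/
def HasDiagInter (S : Type u) (F : Set (Set (Cw S))) : Prop :=
  ∀ B : S → Set (Cw S), (∀ a : S, B a ∈ F) →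
    {σ : Cw S | ∀ a ∈ σ.1, σ ∈ B a} ∈ F

/-- `F` is normal: every regressive-like assignment on an `F`-positive set is
constant-containing on an `F`-positive set. -/
def IsNormalFilter (S : Type u) (F : Set (Set (Cw S))) : Prop :=
  ∀ A : Set (Cw S), Aᶜ ∉ F →
    ∀ G : Cw S → Cw S, (∀ σ ∈ A, (G σ).1.Nonempty ∧ (G σ).1 ⊆ σ.1) →
      ∃ a : S, {σ : Cw S | σ ∈ A ∧ a ∈ (G σ).1}ᶜ ∉ F

/-- A supercompactness measure on `[S]^ω`: a (proper) normal fine ultrafilter. -/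
def IsSCMeasure (S : Type u) (F : Set (Set (Cw S))) : Prop :=
  IsSetFilter S F ∧ ∅ ∉ F ∧ IsFine S F ∧ HasDiagInter S F ∧
    ∀ A : Set (Cw S), A ∈ F ∨ Aᶜ ∈ F

/-- A quasi-strategy for Player II (who moves at odd-length-so-far positions,
i.e. positions of odd length are II's turn... here: II moves when the current
position has odd length). -/
def IsQStratII (S : Type u) (T : Set (List S)) : Prop :=
  [] ∈ T ∧ (∀ p ∈ T, Even p.length → ∀ a : S, p ++ [a] ∈ T) ∧
    (∀ p ∈ T, ¬ Even p.length → ∃ b : S, p ++ [b] ∈ T)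

/-- A quasi-strategy for Player I. -/
def IsQStratI (S : Type u) (T : Set (List S)) : Prop :=
  [] ∈ T ∧ (∀ p ∈ T, ¬ Even p.length → ∀ b : S, p ++ [b] ∈ T) ∧
    (∀ p ∈ T, Even p.length → ∃ a : S, p ++ [a] ∈ T)

/-- The infinite play `f` is consistent with the tree `T`. -/
def PlayThrough (S : Type u) (T : Set (List S)) (f : ℕ → S) : Prop :=
  ∀ n : ℕ, (List.ofFn fun i : Fin n => f i) ∈ T

/-- The countable set of all elements played in the play `f`. -/
def playSet (S : Type u) (f : ℕ → S) : Cw S :=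
  ⟨Set.range f, Set.countable_range f⟩

/-- `T` is a winning quasi-strategy for Player II in the club game on `S` with payoff `A`. -/
def WinsClubII (S : Type u) (T : Set (List S)) (A : Set (Cw S)) : Prop :=
  IsQStratII S T ∧ ∀ f : ℕ → S, PlayThrough S T f → playSet S f ∈ A

/-- `T` is a winning quasi-strategy for Player I in the club game on `S` with payoff `A`
(for Player II). -/
def WinsClubI (S : Type u) (T : Set (List S)) (A : Set (Cw S)) : Prop :=
  IsQStratI S T ∧ ∀ f : ℕ → S, PlayThrough S T f → playSet S f ∉ A

/-- The quasi-club filter `μ_S`. -/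
def qclub (S : Type u) : Set (Set (Cw S)) :=
  {A | ∃ T : Set (List S), WinsClubII S T A}

/-- Winning quasi-strategy for Player II in the length-ω game on `S` with payoff `A ⊆ S^ω`. -/
def WinsGameQSII (S : Type u) (T : Set (List S)) (A : Set (ℕ → S)) : Prop :=
  IsQStratII S T ∧ ∀ f : ℕ → S, PlayThrough S T f → f ∈ A

/-- Winning quasi-strategy for Player I in the length-ω game on `S` with payoff `A ⊆ S^ω`
(for Player II). -/
def WinsGameQSI (S : Type u) (T : Set (List S)) (A : Set (ℕ → S)) : Prop :=
  IsQStratI S T ∧ ∀ f : ℕ → S, PlayThrough S T f → f ∉ A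

/-- The play `f` follows the strategy `s` for Player I (who moves at even rounds). -/
def StratFollowsI (S : Type u) (s : List S → S) (f : ℕ → S) : Prop :=
  ∀ n : ℕ, Even n → f n = s (List.ofFn fun i : Fin n => f i)

/-- The play `f` follows the strategy `s` for Player II (who moves at odd rounds). -/
def StratFollowsII (S : Type u) (s : List S → S) (f : ℕ → S) : Prop :=
  ∀ n : ℕ, ¬ Even n → f n = s (List.ofFn fun i : Fin n => f i)

/-- `AD_ℝ`: every length-ω two-player game with moves from `ℝ` is determined. -/
def ADReal : Prop :=
  ∀ A : Set (ℕ → ℝ),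
    (∃ s : List ℝ → ℝ, ∀ f : ℕ → ℝ, StratFollowsI ℝ s f → f ∉ A) ∨
    (∃ s : List ℝ → ℝ, ∀ f : ℕ → ℝ, StratFollowsII ℝ s f → f ∈ A)

section AuxSC

variable {S : Type u}

/-- Iterated diagonal intersection. -/
lemma iterDiag {μ : Set (Set (Cw S))}
    (hmono : ∀ A B : Set (Cw S), A ∈ μ → A ⊆ B → B ∈ μ)
    (hdiag : HasDiagInter S μ) :
    ∀ (n : ℕ) (E : (Fin n → S) → Set (Cw S)), (∀ v, E v ∈ μ) →
      {σ : Cw S | ∀ v : Fin n → S, (∀ i, v i ∈ σ.1) → σ ∈ E v} ∈ μ := by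
  intro n
  induction n with
  | zero =>
    intro E hE
    refine hmono _ _ (hE (fun i => i.elim0)) ?_
    intro σ hσ v _
    have hv : v = fun i => i.elim0 := funext fun i => i.elim0
    rwa [hv]
  | succ n ih =>
    intro E hE
    have hF : ∀ a : S,
        {σ : Cw S | ∀ v : Fin n → S, (∀ i, v i ∈ σ.1) → σ ∈ E (Fin.cons a v)} ∈ μ :=
      fun a => ih (fun v => E (Fin.cons a v)) (fun v => hE _)
    refine hmono _ _ (hdiag _ hF) ?_
    intro σ hσ v hv
    have h0 := hσ (v 0) (hv 0) (Fin.tail v) (fun i => hv i.succ)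
    rwa [Fin.cons_self_tail] at h0

/-- Countable completeness from fineness and diagonal intersections. -/
lemma ctblInter [Infinite S] {μ : Set (Set (Cw S))}
    (huniv : Set.univ ∈ μ)
    (hmono : ∀ A B : Set (Cw S), A ∈ μ → A ⊆ B → B ∈ μ)
    (hinter : ∀ A B : Set (Cw S), A ∈ μ → B ∈ μ → A ∩ B ∈ μ)
    (hfine : IsFine S μ) (hdiag : HasDiagInter S μ)
    (B : ℕ → Set (Cw S)) (hB : ∀ n, B n ∈ μ) : (⋂ n, B n) ∈ μ := by
  classical
  let c : ℕ ↪ S := Infinite.natEmbedding S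
  let B' : S → Set (Cw S) := fun a => if h : ∃ n, c n = a then B h.choose else Set.univ
  have hB' : ∀ a, B' a ∈ μ := by
    intro a
    by_cases h : ∃ n, c n = a
    · simpa [B', h] using hB h.choose
    · simpa [B', h] using huniv
  have hBc : ∀ n, B' (c n) = B n := by
    intro n
    have h : ∃ m, c m = c n := ⟨n, rfl⟩
    have hmn : h.choose = n := c.injective h.choose_spec
    simp only [B', dif_pos h, hmn]
  have hd := hdiag B' hB'
  have hf := hfine ⟨Set.range c, Set.countable_range _⟩
  refine hmono _ _ (hinter _ _ hd hf) ?_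
  rintro σ ⟨h1, h2⟩
  refine Set.mem_iInter.2 fun n => ?_
  have := h1 (c n) (h2 ⟨n, rfl⟩)
  rwa [hBc n] at this

-- The next move in the canonical play inside `σ`.
open Classical in
noncomputable def nextMv (T : Set (List S)) (σ : Set S) (e : ℕ → S) (p : List S) : S :=
  if Even p.length then e (p.length / 2)
  else if h : ∃ b ∈ σ, p ++ [b] ∈ T then h.choose else e 0

/-- The position after `n` moves of the canonical play. -/
noncomputable def posn (T : Set (List S)) (σ : Set S) (e : ℕ → S) : ℕ → List S
  | 0 => []
  | n + 1 => posn T σ e n ++ [nextMv T σ e (posn T σ e n)]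

/-- The canonical play. -/
noncomputable def playFn (T : Set (List S)) (σ : Set S) (e : ℕ → S) (n : ℕ) : S :=
  nextMv T σ e (posn T σ e n)

lemma posn_length (T : Set (List S)) (σ : Set S) (e : ℕ → S) (n : ℕ) :
    (posn T σ e n).length = n := by
  induction n with
  | zero => rfl
  | succ n ih => simp [posn, ih]

lemma posn_eq_ofFn (T : Set (List S)) (σ : Set S) (e : ℕ → S) (n : ℕ) :
    posn T σ e n = List.ofFn (fun i : Fin n => playFn T σ e i) := by
  induction n with
  | zero => rfl
  | succ n ih =>
    have h1 : posn T σ e (n + 1) = posn T σ e n ++ [playFn T σ e n] := rfl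
    rw [h1, ih, List.ofFn_succ', List.concat_eq_append]
    rfl

lemma posn_good (T : Set (List S)) (σ : Set S) (e : ℕ → S)
    (hT : IsQStratII S T) (he : ∀ k, e k ∈ σ)
    (hcl : ∀ p : List S, (∀ x ∈ p, x ∈ σ) → p ∈ T → ¬ Even p.length →
      ∃ b ∈ σ, p ++ [b] ∈ T) :
    ∀ n, posn T σ e n ∈ T ∧ ∀ x ∈ posn T σ e n, x ∈ σ := by
  intro n
  induction n with
  | zero => exact ⟨hT.1, by simp [posn]⟩
  | succ n ih =>
    obtain ⟨hmem, hsub⟩ := ih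
    by_cases hpar : Even (posn T σ e n).length
    · have hmv : nextMv T σ e (posn T σ e n) = e ((posn T σ e n).length / 2) := by
        simp [nextMv, hpar]
      constructor
      · exact hT.2.1 _ hmem hpar _
      · intro x hx
        rcases List.mem_append.1 hx with hx | hx
        · exact hsub x hx
        · simp only [List.mem_singleton] at hx
          rw [hx, hmv]; exact he _
    · obtain ⟨b, hbσ, hbT⟩ := hcl _ hsub hmem hpar
      have hex : ∃ b ∈ σ, posn T σ e n ++ [b] ∈ T := ⟨b, hbσ, hbT⟩
      have hmv : nextMv T σ e (posn T σ e n) = hex.choose := by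
        rw [nextMv, if_neg hpar, dif_pos hex]
      obtain ⟨hc1, hc2⟩ := hex.choose_spec
      constructor
      · show posn T σ e n ++ [nextMv T σ e (posn T σ e n)] ∈ T
        rw [hmv]; exact hc2
      · intro x hx
        rcases List.mem_append.1 hx with hx | hx
        · exact hsub x hx
        · simp only [List.mem_singleton] at hx
          rw [hx, hmv]; exact hc1

end AuxSC

/-- every supercompactness measure on `[S]^ω` extends the
quasi-club filter. -/
theorem scMeasure_extends_qclub (S : Type u) [Infinite S] (hDC : DCax S)
    (μ : Set (Set (Cw S))) (hμ : IsSCMeasure S μ) :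
    qclub S ⊆ μ := by
  classical
  obtain ⟨⟨huniv, hmono, hinter⟩, hnempty, hfine, hdiag, hultra⟩ := hμ
  rintro A ⟨T, hT, hwin⟩
  -- For each position `p`, the set of `σ` containing a response for II.
  set E : List S → Set (Cw S) :=
    fun p => {σ : Cw S | p ∈ T → ¬ Even p.length → ∃ b ∈ σ.1, p ++ [b] ∈ T} with hE
  have hEμ : ∀ p, E p ∈ μ := by
    intro p
    by_cases hp : p ∈ T ∧ ¬ Even p.length
    · obtain ⟨b, hb⟩ := hT.2.2 p hp.1 hp.2
      refine hmono _ _ (hfine ⟨{b}, Set.countable_singleton b⟩) ?_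
      intro σ hσ _ _
      exact ⟨b, hσ rfl, hb⟩
    · refine hmono _ _ huniv ?_
      intro σ _ h1 h2
      exact absurd ⟨h1, h2⟩ hp
  -- The n-th closure set.
  set D : ℕ → Set (Cw S) :=
    fun n => {σ : Cw S | ∀ v : Fin n → S, (∀ i, v i ∈ σ.1) → σ ∈ E (List.ofFn v)} with hD
  have hDμ : ∀ n, D n ∈ μ := fun n =>
    iterDiag hmono hdiag n (fun v => E (List.ofFn v)) (fun v => hEμ _)
  have hDall : (⋂ n, D n) ∈ μ := ctblInter huniv hmono hinter hfine hdiag D hDμ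
  -- Nonemptiness set.
  have : Nonempty S := inferInstance
  obtain ⟨x₀⟩ := this
  have hNμ : {σ : Cw S | x₀ ∈ σ.1} ∈ μ := by
    refine hmono _ _ (hfine ⟨{x₀}, Set.countable_singleton x₀⟩) ?_
    intro σ hσ; exact hσ rfl
  refine hmono _ _ (hinter _ _ hDall hNμ) ?_
  rintro σ ⟨hσD, hσN⟩
  -- Build a play witnessing `σ ∈ A`.
  have hcl : ∀ p : List S, (∀ x ∈ p, x ∈ σ.1) → p ∈ T → ¬ Even p.length →
      ∃ b ∈ σ.1, p ++ [b] ∈ T := by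
    intro p hsub hmem hpar
    have hσn := Set.mem_iInter.1 hσD p.length
    have := hσn (fun i : Fin p.length => p.get i) (fun i => hsub _ (p.get_mem i))
    rw [List.ofFn_get] at this
    exact this hmem hpar
  obtain ⟨e, hee⟩ := σ.2.exists_eq_range ⟨x₀, hσN⟩
  have he : ∀ k, e k ∈ σ.1 := fun k => hee ▸ ⟨k, rfl⟩
  have hgood := posn_good T σ.1 e hT he hcl
  set f : ℕ → S := playFn T σ.1 e with hf
  have hplay : PlayThrough S T f := by
    intro n
    have := (hgood n).1
    rwa [posn_eq_ofFn] at this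
  have hrange : Set.range f = σ.1 := by
    apply Set.Subset.antisymm
    · rintro x ⟨n, rfl⟩
      refine (hgood (n + 1)).2 _ ?_
      rw [posn]
      exact List.mem_append_right _ (List.mem_singleton.2 rfl)
    · intro x hx
      rw [hee] at hx
      obtain ⟨k, rfl⟩ := hx
      refine ⟨2 * k, ?_⟩
      have hlen : (posn T σ.1 e (2 * k)).length = 2 * k := posn_length _ _ _ _
      have hpar : Even (posn T σ.1 e (2 * k)).length := by rw [hlen]; exact ⟨k, by ring⟩
      show nextMv T σ.1 e (posn T σ.1 e (2 * k)) = e k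
      rw [nextMv, if_pos hpar, hlen]
      congr 1
      omega
  have := hwin f hplay
  have hps : playSet S f = σ := Subtype.ext hrange
  rwa [hps] at this
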